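/- For any norm χ on a finite-dimensional vector space V of dimension N and any basis (e_j) of V, the volume vol(χ) (the mean of the spectrum of χ) satisfies vol(χ) ≥ (1/N)∑_j χ(e_j), with equality if and only if (e_j) is χ-orthogonal. -/

import Mathlib

open scoped ENNReal

noncomputable section
attribute [local instance] Classical.propDecidable

/-- An additive non-Archimedean norm on a vector space over a trivially valued field:
`χ : V → ℝ ∪ {+∞}` with `χ v = +∞` iff `v = 0`, invariance under nonzero scalars, and
the ultrametric inequality `χ(v+w) ≥ min (χ v) (χ w)`. -/
structure NAnorm (k V : Type*) [Field k] [AddCommGroup V] [Module k V] where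
  toFun : V → EReal
  ne_bot : ∀ v, toFun v ≠ ⊥
  top_iff : ∀ v, toFun v = ⊤ ↔ v = 0
  smul_eq : ∀ (a : k) (v : V), a ≠ 0 → toFun (a • v) = toFun v
  ultra : ∀ v w, min (toFun v) (toFun w) ≤ toFun (v + w)

namespace NAnorm

variable {k V : Type*} [Field k] [AddCommGroup V] [Module k V]

/-- A basis is `χ`-orthogonal if the norm of any linear combination is the minimum of the
norms of the basis vectors appearing with a nonzero coefficient. -/
def IsOrthogonal {N : ℕ} (χ : NAnorm k V) (b : Module.Basis (Fin N) k V) : Prop :=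
  ∀ a : Fin N → k, χ.toFun (∑ i, a i • b i) = ⨅ i ∈ {i | a i ≠ 0}, χ.toFun (b i)

/-- The real value of the norm (finite on nonzero vectors). -/
noncomputable def val (χ : NAnorm k V) (v : V) : ℝ := (χ.toFun v).toReal

/-- The pointwise minimum of two norms. -/
noncomputable def inf (χ χ' : NAnorm k V) : NAnorm k V where
  toFun v := min (χ.toFun v) (χ'.toFun v)
  ne_bot v h := by
    rcases min_cases (χ.toFun v) (χ'.toFun v) with ⟨h1, _⟩ | ⟨h1, _⟩
    · exact χ.ne_bot v (by rw [← h1]; exact h)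
    · exact χ'.ne_bot v (by rw [← h1]; exact h)
  top_iff v := by
    constructor
    · intro h
      have h1 : (⊤ : EReal) ≤ χ.toFun v := by rw [← h]; exact min_le_left _ _
      exact (χ.top_iff v).1 (le_antisymm le_top h1)
    · intro h
      show min (χ.toFun v) (χ'.toFun v) = ⊤
      rw [(χ.top_iff v).2 h, (χ'.top_iff v).2 h, min_self]
  smul_eq a v ha := by
    show min (χ.toFun (a • v)) (χ'.toFun (a • v)) = min (χ.toFun v) (χ'.toFun v)
    rw [χ.smul_eq a v ha, χ'.smul_eq a v ha]
  ultra v w := by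
    refine le_min ?_ ?_
    · exact le_trans (min_le_min (min_le_left _ _) (min_le_left _ _)) (χ.ultra v w)
    · exact le_trans (min_le_min (min_le_right _ _) (min_le_right _ _)) (χ'.ultra v w)

/-- The Goldman–Iwahori distance `d_∞(χ,χ') = sup_{v ≠ 0} |χ(v) - χ'(v)|`. -/
noncomputable def dInfty (χ χ' : NAnorm k V) : ℝ≥0∞ :=
  ⨆ v : {v : V // v ≠ 0}, ENNReal.ofReal |χ.val v.1 - χ'.val v.1|

/-- The distance `d_p(χ,χ')`, computed from the relative spectrum of `χ,χ'` in a joint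
orthogonal basis. -/
noncomputable def dp (p : ℝ) (χ χ' : NAnorm k V) : ℝ :=
  if h : ∃ b : Module.Basis (Fin (Module.finrank k V)) k V, χ.IsOrthogonal b ∧ χ'.IsOrthogonal b then
    ((Module.finrank k V : ℝ)⁻¹ *
      ∑ j, |χ.val (h.choose j) - χ'.val (h.choose j)| ^ p) ^ (1 / p)
  else 0

/-- The volume of a norm: the mean of its spectrum, computed in an orthogonal basis. -/
noncomputable def vol (χ : NAnorm k V) : ℝ :=
  if h : ∃ b : Module.Basis (Fin (Module.finrank k V)) k V, χ.IsOrthogonal b then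
    (Module.finrank k V : ℝ)⁻¹ * ∑ j, χ.val (h.choose j)
  else 0

end NAnorm


namespace NAnorm

variable {k V : Type*} [Field k] [AddCommGroup V] [Module k V]

-- auxiliary lemmas
lemma toFun_zero (χ : NAnorm k V) : χ.toFun 0 = ⊤ := (χ.top_iff 0).2 rfl

lemma toFun_neg (χ : NAnorm k V) (v : V) : χ.toFun (-v) = χ.toFun v := by
  have := χ.smul_eq (-1) v (by norm_num)
  simpa using this

lemma add_eq_of_lt (χ : NAnorm k V) {v w : V} (h : χ.toFun v < χ.toFun w) :
    χ.toFun (v + w) = χ.toFun v := by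
  have h1 : χ.toFun v ≤ χ.toFun (v + w) := by
    have := χ.ultra v w
    rwa [min_eq_left h.le] at this
  refine le_antisymm ?_ h1
  have h2 := χ.ultra (v + w) (-w)
  rw [χ.toFun_neg, add_neg_cancel_right] at h2
  rcases min_le_iff.mp h2 with h3 | h3
  · exact h3
  · exact absurd h3 (not_le.mpr h)

lemma add_eq_min (χ : NAnorm k V) {v w : V} (h : χ.toFun v ≠ χ.toFun w) :
    χ.toFun (v + w) = min (χ.toFun v) (χ.toFun w) := by
  rcases lt_or_gt_of_ne h with hlt | hlt
  · rw [χ.add_eq_of_lt hlt, min_eq_left hlt.le]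
  · rw [add_comm, χ.add_eq_of_lt hlt, min_eq_right hlt.le]

lemma inf_le_sum (χ : NAnorm k V) {ι : Type*} (s : Finset ι) (w : ι → V) :
    (s.inf fun i => χ.toFun (w i)) ≤ χ.toFun (∑ i ∈ s, w i) := by
  classical
  induction s using Finset.cons_induction with
  | empty => simp [χ.toFun_zero]
  | cons i s hi ih =>
    rw [Finset.sum_cons, Finset.inf_cons]
    refine le_trans ?_ (χ.ultra _ _)
    exact min_le_min le_rfl ih

lemma sum_eq_inf_of_injOn (χ : NAnorm k V) {ι : Type*} (s : Finset ι) (w : ι → V)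
    (hd : Set.InjOn (fun i => χ.toFun (w i)) s) :
    χ.toFun (∑ i ∈ s, w i) = s.inf fun i => χ.toFun (w i) := by
  classical
  induction s using Finset.cons_induction with
  | empty => simp [χ.toFun_zero]
  | cons i s hi ih =>
    rcases s.eq_empty_or_nonempty with rfl | hs
    · simp
    · have hd' : Set.InjOn (fun i => χ.toFun (w i)) s := by
        intro x hx y hy hxy
        exact hd (by simp [hx]) (by simp [hy]) hxy
      have ihs := ih hd'
      obtain ⟨j, hj, hjinf⟩ := Finset.exists_mem_eq_inf s hs (fun i => χ.toFun (w i))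
      have hne : χ.toFun (w i) ≠ χ.toFun (∑ x ∈ s, w x) := by
        rw [ihs, hjinf]
        intro hc
        have : i = j := hd (by simp) (by simp [hj]) hc
        exact hi (this ▸ hj)
      rw [Finset.sum_cons, χ.add_eq_min hne, Finset.inf_cons, ihs]

lemma linearIndependent_of_injective (χ : NAnorm k V) {ι : Type*} (w : ι → V)
    (h0 : ∀ i, w i ≠ 0) (hd : Function.Injective fun i => χ.toFun (w i)) :
    LinearIndependent k w := by
  classical
  rw [linearIndependent_iff']
  intro s g hg i hi
  by_contra hgi
  set t := s.filter fun j => g j ≠ 0 with ht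
  have hts : ∑ j ∈ t, g j • w j = 0 := by
    rw [← hg]
    exact Finset.sum_filter_of_ne (fun j _ hj => by
      intro hgj; exact hj (by rw [hgj, zero_smul]))
  have htne : t.Nonempty := ⟨i, by simp [ht, hi, hgi]⟩
  have hinj : Set.InjOn (fun j => χ.toFun (g j • w j)) t := by
    intro x hx y hy hxy
    have hgx : g x ≠ 0 := (Finset.mem_filter.mp hx).2
    have hgy : g y ≠ 0 := (Finset.mem_filter.mp hy).2
    simp only at hxy
    rw [χ.smul_eq _ _ hgx, χ.smul_eq _ _ hgy] at hxy
    exact hd hxy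
  have := χ.sum_eq_inf_of_injOn t (fun j => g j • w j) hinj
  rw [hts, χ.toFun_zero] at this
  obtain ⟨j, hj, hjinf⟩ := Finset.exists_mem_eq_inf t htne (fun j => χ.toFun (g j • w j))
  rw [hjinf, χ.smul_eq _ _ (Finset.mem_filter.mp hj).2] at this
  exact h0 j ((χ.top_iff (w j)).mp this.symm) |>.elim


lemma finite_vals (χ : NAnorm k V) [FiniteDimensional k V] :
    (χ.val '' {v | v ≠ 0}).Finite := by
  have hT : (χ.toFun '' {v | v ≠ 0}).Finite := by
    rw [← Set.finite_coe_iff]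
    set T := χ.toFun '' {v | v ≠ 0} with hTdef
    have hch : ∀ x : T, ∃ v : V, v ≠ 0 ∧ χ.toFun v = (x : EReal) := by
      rintro ⟨x, v, hv, rfl⟩
      exact ⟨v, hv, rfl⟩
    choose f hf0 hfx using hch
    have hli : LinearIndependent k f :=
      χ.linearIndependent_of_injective f hf0 (fun x y hxy => by
        apply Subtype.ext
        rw [← hfx x, ← hfx y]
        exact hxy)
    exact hli.finite
  have : χ.val '' {v | v ≠ 0} = EReal.toReal '' (χ.toFun '' {v | v ≠ 0}) := by
    rw [← Set.image_comp]; rfl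
  rw [this]
  exact hT.image _

lemma exists_max_basis (χ : NAnorm k V) [FiniteDimensional k V] {N : ℕ}
    (e : Module.Basis (Fin N) k V) :
    ∃ b : Module.Basis (Fin N) k V, ∀ e' : Module.Basis (Fin N) k V,
      ∑ j, χ.val (e' j) ≤ ∑ j, χ.val (b j) := by
  classical
  set S : Set ℝ := χ.val '' {v | v ≠ 0} with hS
  set B : Set ℝ := (fun g : Fin N → ℝ => ∑ j, g j) '' (Set.univ.pi fun _ => S) with hB
  have hBfin : B.Finite := (Set.Finite.pi fun _ => χ.finite_vals).image _
  set A : Set ℝ := Set.range fun e' : Module.Basis (Fin N) k V => ∑ j, χ.val (e' j) with hA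
  have hAB : A ⊆ B := by
    rintro x ⟨e', rfl⟩
    exact ⟨fun j => χ.val (e' j), fun j _ => ⟨e' j, e'.ne_zero j, rfl⟩, rfl⟩
  have hAfin : A.Finite := hBfin.subset hAB
  have hAne : A.Nonempty := ⟨_, ⟨e, rfl⟩⟩
  obtain ⟨a, haA, hmax⟩ := hAfin.exists_maximal hAne
  obtain ⟨b, rfl⟩ := haA
  refine ⟨b, fun e' => ?_⟩
  by_contra hlt
  push_neg at hlt
  exact absurd (hmax ⟨e', rfl⟩ hlt.le) (not_le.mpr hlt)

lemma biInf_eq_filter_inf (χ : NAnorm k V) {N : ℕ} (e : Fin N → V) (a : Fin N → k) :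
    (⨅ i ∈ {i | a i ≠ 0}, χ.toFun (e i)) =
      (Finset.univ.filter fun i => a i ≠ 0).inf fun i => χ.toFun (e i) := by
  rw [Finset.inf_eq_iInf]
  simp only [Finset.mem_filter, Finset.mem_univ, true_and, Set.mem_setOf_eq]

lemma sum_le_of_orthogonal (χ : NAnorm k V) {N : ℕ} (b e : Module.Basis (Fin N) k V)
    (hb : χ.IsOrthogonal b) : ∑ j, χ.val (e j) ≤ ∑ j, χ.val (b j) := by
  classical
  set M := b.toMatrix ⇑e with hM
  have : Invertible M := b.invertibleToMatrix e
  have hdet : M.det ≠ 0 := (Matrix.isUnit_det_of_invertible M).ne_zero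
  rw [Matrix.det_apply] at hdet
  obtain ⟨σ, -, hσ⟩ := Finset.exists_ne_zero_of_sum_ne_zero hdet
  have hprod : ∀ j, M (σ j) j ≠ 0 := by
    have : (∏ i, M (σ i) i) ≠ 0 := fun hc => hσ (by rw [hc, smul_zero])
    intro j
    exact Finset.prod_ne_zero_iff.mp this j (Finset.mem_univ j)
  have key : ∀ j, χ.val (e j) ≤ χ.val (b (σ j)) := by
    intro j
    have h1 : χ.toFun (e j) = ⨅ i ∈ {i | b.repr (e j) i ≠ 0}, χ.toFun (b i) := by
      have := hb fun i => b.repr (e j) i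
      rwa [b.sum_repr (e j)] at this
    have hmem : σ j ∈ {i | b.repr (e j) i ≠ 0} := by
      have := hprod j
      rwa [hM, Module.Basis.toMatrix_apply] at this
    have h2 : χ.toFun (e j) ≤ χ.toFun (b (σ j)) := by
      rw [h1]
      exact biInf_le _ hmem
    exact EReal.toReal_le_toReal h2 (χ.ne_bot _)
      (fun hc => (b.ne_zero (σ j)) ((χ.top_iff _).mp hc))
  calc ∑ j, χ.val (e j) ≤ ∑ j, χ.val (b (σ j)) := Finset.sum_le_sum fun j _ => key j
    _ = ∑ j, χ.val (b j) := Equiv.sum_comp σ fun i => χ.val (b i)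


lemma exists_basis_sum_lt (χ : NAnorm k V) [FiniteDimensional k V]
    (e : Module.Basis (Fin (Module.finrank k V)) k V) (h : ¬ χ.IsOrthogonal e) :
    ∃ e' : Module.Basis (Fin (Module.finrank k V)) k V,
      ∑ j, χ.val (e j) < ∑ j, χ.val (e' j) := by
  classical
  rw [IsOrthogonal] at h
  push_neg at h
  obtain ⟨a, ha⟩ := h
  set v := ∑ i, a i • e i with hv
  rw [χ.biInf_eq_filter_inf ⇑e a] at ha
  set F := Finset.univ.filter fun i => a i ≠ 0 with hF
  have hvF : v = ∑ i ∈ F, a i • e i := by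
    rw [hv, hF]
    refine (Finset.sum_filter_of_ne ?_).symm
    intro i _ hne hai
    exact hne (by rw [hai, zero_smul])
  have hlow : (F.inf fun i => χ.toFun (e i)) ≤ χ.toFun v := by
    have h1 := χ.inf_le_sum F fun i => a i • e i
    rw [← hvF] at h1
    refine le_trans (le_of_eq ?_) h1
    exact Finset.inf_congr rfl fun i hi => (χ.smul_eq _ _ (Finset.mem_filter.mp hi).2).symm
  have hstrict : (F.inf fun i => χ.toFun (e i)) < χ.toFun v := hlow.lt_of_ne (Ne.symm ha)
  have hFne : F.Nonempty := by
    rcases F.eq_empty_or_nonempty with hFe | hne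
    · rw [hFe] at hstrict
      simp at hstrict
    · exact hne
  have hvne : v ≠ 0 := by
    intro hc
    obtain ⟨i1, hi1⟩ := hFne
    exact (Finset.mem_filter.mp hi1).2
      (linearIndependent_iff'.mp e.linearIndependent Finset.univ a (by rw [← hv]; exact hc)
        i1 (Finset.mem_univ i1))
  obtain ⟨i0, hi0F, hinf0⟩ := Finset.exists_mem_eq_inf F hFne fun i => χ.toFun (e i)
  set f : Fin (Module.finrank k V) → V := Function.update ⇑e i0 v with hf
  have hspan : ⊤ ≤ Submodule.span k (Set.range f) := by
    rw [← e.span_eq]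
    refine Submodule.span_le.mpr ?_
    rintro x ⟨j, rfl⟩
    by_cases hj : j = i0
    · subst hj
      have haj : a j ≠ 0 := (Finset.mem_filter.mp hi0F).2
      have hvsplit : v = a j • e j + ∑ i ∈ F.erase j, a i • e i := by
        rw [hvF, ← Finset.add_sum_erase _ _ hi0F]
      have hej : (e j : V) = (a j)⁻¹ • (v - ∑ i ∈ F.erase j, a i • e i) := by
        rw [hvsplit, add_sub_cancel_right, smul_smul, inv_mul_cancel₀ haj, one_smul]
      rw [hej]
      refine Submodule.smul_mem _ _ (Submodule.sub_mem _ ?_ ?_)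
      · exact Submodule.subset_span ⟨j, by simp [hf]⟩
      · refine Submodule.sum_mem _ fun i hi => Submodule.smul_mem _ _ ?_
        exact Submodule.subset_span ⟨i, by
          simp [hf, Function.update_of_ne (Finset.ne_of_mem_erase hi)]⟩
    · exact Submodule.subset_span ⟨j, by simp [hf, Function.update_of_ne hj]⟩
  have hcard : Fintype.card (Fin (Module.finrank k V)) = Module.finrank k V := by simp
  refine ⟨basisOfTopLeSpanOfCardEqFinrank f hspan hcard, ?_⟩
  rw [coe_basisOfTopLeSpanOfCardEqFinrank f hspan hcard]
  have hsum_e : ∑ j, χ.val (e j) = χ.val (e i0) + ∑ j ∈ Finset.univ.erase i0, χ.val (e j) :=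
    (Finset.add_sum_erase _ _ (Finset.mem_univ i0)).symm
  have hsum_f : ∑ j, χ.val (f j) = χ.val v + ∑ j ∈ Finset.univ.erase i0, χ.val (e j) := by
    rw [← Finset.add_sum_erase _ (fun j => χ.val (f j)) (Finset.mem_univ i0)]
    congr 1
    · simp [hf]
    · exact Finset.sum_congr rfl fun j hj => by
        simp [hf, Function.update_of_ne (Finset.ne_of_mem_erase hj)]
  rw [hsum_e, hsum_f]
  have hlt : χ.val (e i0) < χ.val v := by
    have h1 : χ.toFun (e i0) < χ.toFun v := by rw [← hinf0]; exact hstrict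
    have hei0top : χ.toFun (e i0) ≠ ⊤ := fun hc => e.ne_zero i0 ((χ.top_iff _).mp hc)
    have hvtop : χ.toFun v ≠ ⊤ := fun hc => hvne ((χ.top_iff _).mp hc)
    show (χ.toFun (e i0)).toReal < (χ.toFun v).toReal
    rw [← EReal.coe_lt_coe_iff, EReal.coe_toReal hei0top (χ.ne_bot _),
      EReal.coe_toReal hvtop (χ.ne_bot _)]
    exact h1
  linarith

lemma exists_orthogonal (χ : NAnorm k V) [FiniteDimensional k V]
    (e : Module.Basis (Fin (Module.finrank k V)) k V) :
    ∃ b : Module.Basis (Fin (Module.finrank k V)) k V, χ.IsOrthogonal b := by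
  obtain ⟨b, hmax⟩ := χ.exists_max_basis e
  refine ⟨b, ?_⟩
  by_contra h
  obtain ⟨e', he'⟩ := χ.exists_basis_sum_lt b h
  exact absurd (hmax e') (not_le.mpr he')


end NAnorm

/-- For any norm  on a finite-dimensional vector space  and any basis
, the volume (mean of the spectrum) satisfies , with
equality iff  is -orthogonal. -/
theorem vol_ge_mean_of_basis {k V : Type*} [Field k] [AddCommGroup V] [Module k V]
    [FiniteDimensional k V] (χ : NAnorm k V)
    (e : Module.Basis (Fin (Module.finrank k V)) k V) :
    (Module.finrank k V : ℝ)⁻¹ * ∑ j, χ.val (e j) ≤ χ.vol ∧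
    ((Module.finrank k V : ℝ)⁻¹ * ∑ j, χ.val (e j) = χ.vol ↔ χ.IsOrthogonal e)  := by
  classical
  obtain ⟨b0, hb0⟩ := χ.exists_orthogonal e
  have hex : ∃ b : Module.Basis (Fin (Module.finrank k V)) k V, χ.IsOrthogonal b := ⟨b0, hb0⟩
  have hvol : χ.vol = (Module.finrank k V : ℝ)⁻¹ * ∑ j, χ.val (hex.choose j) := by
    rw [NAnorm.vol, dif_pos hex]
  have hchoose := hex.choose_spec
  have hle : ∑ j, χ.val (e j) ≤ ∑ j, χ.val (hex.choose j) :=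
    χ.sum_le_of_orthogonal hex.choose e hchoose
  have hNnn : (0:ℝ) ≤ (Module.finrank k V : ℝ)⁻¹ := by positivity
  refine ⟨?_, ?_, ?_⟩
  · rw [hvol]
    exact mul_le_mul_of_nonneg_left hle hNnn
  · intro heq
    by_cases hN : Module.finrank k V = 0
    · intro a
      haveI : IsEmpty (Fin (Module.finrank k V)) := by rw [hN]; infer_instance
      rw [iInf_of_isEmpty]
      simp [χ.toFun_zero]
    · have hsum : ∑ j, χ.val (e j) = ∑ j, χ.val (hex.choose j) := by
        apply mul_left_cancel₀
          (inv_ne_zero (Nat.cast_ne_zero.mpr hN) : ((Module.finrank k V : ℝ))⁻¹ ≠ 0)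
        rw [← hvol]
        exact heq
      by_contra h
      obtain ⟨e', he'⟩ := χ.exists_basis_sum_lt e h
      have h2 := χ.sum_le_of_orthogonal hex.choose e' hchoose
      linarith
  · intro he
    have h1 := χ.sum_le_of_orthogonal e hex.choose he
    rw [hvol]
    congr 1
    exact le_antisymm hle h1
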